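/- Let ζ ∈ (0,1). Suppose τ : ℂ → ℂ is a function that is analytic on the open unit disk D = {w ∈ ℂ : |w| < 1}, has no zeros on D, and is such that the functions w ↦ τ_w^{(n)}(1) converge uniformly on D to τ as n → ∞. Let B ⊆ ℂ be a bounded open set whose closure is contained in {z ∈ ℂ : |z| > 1} \ closure(𝒵). Then the sequence of functions z ↦ τ_z^{(n)}(1) converges uniformly on B to the function z ↦ 1/τ(1/z). -/

import Mathlib

/-- `h ζ w = ((ζ + w)/(1 + ζ w))^2`. -/
noncomputable def hmap (ζ : ℝ) (w : ℂ) : ℂ := (((ζ : ℂ) + w) / (1 + (ζ : ℂ) * w)) ^ 2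

/-- The `n`-th iterate `τ_z^{(n)}(1)` of `u ↦ h(z·u)` starting from `1`. -/
noncomputable def tauIter (ζ : ℝ) (z : ℂ) : ℕ → ℂ
  | 0 => 1
  | n + 1 => hmap ζ (z * tauIter ζ z n)

/-- The pair `(P_n, Q_n)` of polynomials defined by `P_0 = Q_0 = 1`,
`P_{n+1} = (ζ Q_n + X P_n)²`, `Q_{n+1} = (Q_n + ζ X P_n)²`. -/
noncomputable def PQ (ζ : ℝ) : ℕ → Polynomial ℂ × Polynomial ℂ
  | 0 => (1, 1)
  | n + 1 =>
    (((ζ : ℂ) • (PQ ζ n).2 + Polynomial.X * (PQ ζ n).1) ^ 2,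
     ((PQ ζ n).2 + (ζ : ℂ) • (Polynomial.X * (PQ ζ n).1)) ^ 2)

noncomputable def Ppoly (ζ : ℝ) (n : ℕ) : Polynomial ℂ := (PQ ζ n).1

noncomputable def Qpoly (ζ : ℝ) (n : ℕ) : Polynomial ℂ := (PQ ζ n).2

/-- `R_n = ζ·X·P_n + Q_n`. -/
noncomputable def Rpoly (ζ : ℝ) (n : ℕ) : Polynomial ℂ :=
  (ζ : ℂ) • (Polynomial.X * Ppoly ζ n) + Qpoly ζ n

/-- `𝒵_n`, the set of complex roots of `R_n`. -/
def Zset (ζ : ℝ) (n : ℕ) : Set ℂ := {z : ℂ | (Rpoly ζ n).eval z = 0}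

/-- `𝒵 = ⋃ₙ 𝒵_n`. -/
def ZsetAll (ζ : ℝ) : Set ℂ := ⋃ n : ℕ, Zset ζ n

open Filter

lemma key (ζ : ℝ) (hζ0 : 0 < ζ) (hζ1 : ζ < 1) (z : ℂ) (hz : 1 < ‖z‖)
    (hR : ∀ m, (Rpoly ζ m).eval z ≠ 0) (n : ℕ) :
    (Qpoly ζ n).eval z ≠ 0 ∧
    tauIter ζ z n = (Ppoly ζ n).eval z / (Qpoly ζ n).eval z ∧
    1 ≤ ‖tauIter ζ z n‖ ∧
    tauIter ζ z n * tauIter ζ (1/z) n = 1 := by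
  induction n with
  | zero => simp [tauIter, Ppoly, Qpoly, PQ]
  | succ n ih =>
    obtain ⟨hQ, hs, habs, hst⟩ := ih
    set s := tauIter ζ z n with hsdef
    set t := tauIter ζ (1/z) n with htdef
    set Pv := (Ppoly ζ n).eval z with hPv
    set Qv := (Qpoly ζ n).eval z with hQv
    have hz0 : z ≠ 0 := by
      intro h; rw [h] at hz; simp at hz; linarith
    have hsne : s ≠ 0 := left_ne_zero_of_mul_eq_one hst
    have htne : t ≠ 0 := right_ne_zero_of_mul_eq_one hst
    have ht : t = 1 / s := by
      rw [eq_div_iff hsne, mul_comm]; exact hst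
    set w : ℂ := z * s with hwdef
    have hwabs : 1 < ‖w‖ := by
      rw [hwdef, norm_mul]
      nlinarith [norm_nonneg z]
    have hw0 : w ≠ 0 := by
      intro h; rw [h] at hwabs; simp at hwabs; linarith
    have hζabs : ‖(ζ : ℂ)‖ = ζ := by
      rw [Complex.norm_real, Real.norm_eq_abs, abs_of_pos hζ0]
    -- numerator nonzero
    have hnum : (ζ : ℂ) + w ≠ 0 := by
      intro h
      have : w = -(ζ : ℂ) := by linear_combination h
      rw [this, norm_neg, hζabs] at hwabs
      linarith
    -- R eval
    have hRval : (Rpoly ζ n).eval z = (ζ : ℂ) * (z * Pv) + Qv := by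
      simp [Rpoly, Ppoly, Qpoly, hPv, hQv]
    -- denominator nonzero
    have hden : 1 + (ζ : ℂ) * w ≠ 0 := by
      intro h
      apply hR n
      rw [hRval]
      have : (1 + (ζ : ℂ) * w) * Qv = (ζ : ℂ) * (z * Pv) + Qv := by
        rw [hwdef, hs]; field_simp; ring
      rw [← this, h, zero_mul]
    have hQ'2 : (Qpoly ζ (n+1)).eval z = (Qv + (ζ : ℂ) * (z * Pv)) ^ 2 := by
      simp [Qpoly, PQ, hPv, hQv, Ppoly]
    have hQ' : (Qpoly ζ (n+1)).eval z ≠ 0 := by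
      rw [hQ'2]
      exact pow_ne_zero 2 (fun h => hR n (by rw [hRval]; linear_combination h))
    have hstau : tauIter ζ z (n+1) = hmap ζ w := rfl
    have hs' : tauIter ζ z (n+1) = (Ppoly ζ (n+1)).eval z / (Qpoly ζ (n+1)).eval z := by
      rw [hstau, hmap]
      have hP' : (Ppoly ζ (n+1)).eval z = ((ζ : ℂ) * Qv + z * Pv) ^ 2 := by
        simp [Ppoly, PQ, hPv, hQv, Qpoly]
      rw [hP', hQ'2, ← div_pow]
      congr 1
      rw [hwdef, hs]
      have hd2 : Qv + (ζ : ℂ) * (z * Pv) ≠ 0 := by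
        intro h; apply hR n; rw [hRval]; linear_combination h
      field_simp
    have habs' : 1 ≤ ‖tauIter ζ z (n+1)‖ := by
      rw [hstau, hmap]
      have hnormsq : Complex.normSq (1 + (ζ : ℂ) * w) ≤ Complex.normSq ((ζ : ℂ) + w) := by
        have hw1 : 1 ≤ w.re * w.re + w.im * w.im := by
          have := Complex.sq_norm w
          rw [Complex.normSq_apply] at this
          nlinarith
        simp only [Complex.normSq_apply, Complex.add_re, Complex.add_im, Complex.mul_re,
          Complex.mul_im, Complex.ofReal_re, Complex.ofReal_im, Complex.one_re, Complex.one_im]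
        have hkey : 0 ≤ (1 - ζ*ζ) * (w.re*w.re + w.im*w.im - 1) :=
          mul_nonneg (by nlinarith) (by linarith)
        nlinarith [hkey]
      have hle : ‖1 + (ζ : ℂ) * w‖ ≤ ‖(ζ : ℂ) + w‖ := by
        rw [Complex.norm_def, Complex.norm_def]
        exact Real.sqrt_le_sqrt hnormsq
      have hdpos : 0 < ‖1 + (ζ : ℂ) * w‖ := by
        simpa [norm_pos_iff] using hden
      rw [norm_pow, norm_div]
      have h1 : 1 ≤ ‖(ζ : ℂ) + w‖ / ‖1 + (ζ : ℂ) * w‖ :=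
        (one_le_div hdpos).mpr hle
      nlinarith
    have hprod : tauIter ζ z (n+1) * tauIter ζ (1/z) (n+1) = 1 := by
      have httau : tauIter ζ (1/z) (n+1) = hmap ζ ((1/z) * t) := rfl
      have hwt : (1/z) * t = w⁻¹ := by
        rw [ht, hwdef]; field_simp
      rw [hstau, httau, hwt, hmap, hmap]
      have hdinv : 1 + (ζ : ℂ) * w⁻¹ ≠ 0 := by
        intro h
        apply hnum
        have : ((1 : ℂ) + (ζ : ℂ) * w⁻¹) * w = w + (ζ : ℂ) := by field_simp
        rw [h, zero_mul] at this
        linear_combination -this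
      have hninv : (ζ : ℂ) + w⁻¹ ≠ 0 := by
        intro h
        apply hden
        have : ((ζ : ℂ) + w⁻¹) * w = (ζ : ℂ) * w + 1 := by field_simp
        rw [h, zero_mul] at this
        linear_combination -this
      have hwζ : w + (ζ : ℂ) ≠ 0 := by
        intro h; apply hnum; linear_combination h
      have e1 : (ζ : ℂ) + w⁻¹ = ((ζ : ℂ)*w + 1) * w⁻¹ := by field_simp
      have e2 : (1 : ℂ) + (ζ : ℂ)*w⁻¹ = (w + (ζ : ℂ)) * w⁻¹ := by field_simp
      rw [e1, e2, mul_div_mul_right _ _ (inv_ne_zero hw0), ← mul_pow]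
      have : ((ζ : ℂ) + w) / (1 + (ζ : ℂ) * w) * (((ζ : ℂ)*w + 1) / (w + (ζ : ℂ))) = 1 := by
        rw [div_mul_div_comm, div_eq_one_iff_eq (mul_ne_zero hden hwζ)]
        ring
      rw [this, one_pow]
    exact ⟨hQ', hs', habs', hprod⟩


/-- If `τ` is analytic and zero-free on the open unit disk and is the uniform limit there
of the maps `w ↦ τ_w^{(n)}(1)`, then on any bounded open set `B` with closure contained in
`{|z| > 1} \ closure 𝒵`, the maps `z ↦ τ_z^{(n)}(1)` converge uniformly to `z ↦ 1/τ(1/z)`. -/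
theorem stmt10 (ζ : ℝ) (hζ0 : 0 < ζ) (hζ1 : ζ < 1) (τ : ℂ → ℂ)
    (hτa : AnalyticOnNhd ℂ τ {w : ℂ | ‖w‖ < 1})
    (hτ0 : ∀ w ∈ {w : ℂ | ‖w‖ < 1}, τ w ≠ 0)
    (hτu : TendstoUniformlyOn (fun n w => tauIter ζ w n) τ atTop
      {w : ℂ | ‖w‖ < 1})
    (B : Set ℂ) (hBo : IsOpen B) (hBb : Bornology.IsBounded B)
    (hBc : closure B ⊆ {z : ℂ | 1 < ‖z‖} \ closure (ZsetAll ζ)) :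
    TendstoUniformlyOn (fun n z => tauIter ζ z n) (fun z => 1 / τ (1 / z)) atTop B := by
  rcases B.eq_empty_or_nonempty with hB | hBne
  · rw [hB]; exact tendstoUniformlyOn_empty
  have hK : IsCompact (closure B) := hBb.isCompact_closure
  have hK1 : ∀ z ∈ closure B, 1 < ‖z‖ := fun z hz => (hBc hz).1
  have hKz0 : ∀ z ∈ closure B, z ≠ 0 := by
    intro z hz h
    have := hK1 z hz
    rw [h] at this; simp at this; linarith
  set K' : Set ℂ := (fun z => 1/z) '' closure B with hK'def
  have hK'c : IsCompact K' := hK.image_of_continuousOn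
    (ContinuousOn.div continuousOn_const continuousOn_id (fun z hz => hKz0 z hz))
  have hK'disk : K' ⊆ {w : ℂ | ‖w‖ < 1} := by
    rintro w ⟨z, hz, rfl⟩
    have h1 := hK1 z hz
    simp only [Set.mem_setOf_eq, one_div, norm_inv]
    exact inv_lt_one_of_one_lt₀ h1
  have hK'ne : K'.Nonempty := hBne.closure.image _
  obtain ⟨w0, hw0K, hmin'⟩ := hK'c.exists_isMinOn hK'ne
    (continuous_norm.comp_continuousOn (hτa.continuousOn.mono hK'disk))
  have hmin : ∀ y ∈ K', ‖τ w0‖ ≤ ‖τ y‖ := fun y hy =>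
    isMinOn_iff.mp hmin' y hy
  set δ := ‖τ w0‖ with hδdef
  have hδ : 0 < δ := by
    rw [hδdef, norm_pos_iff]
    exact hτ0 w0 (hK'disk hw0K)
  rw [Metric.tendstoUniformlyOn_iff]
  intro ε hε
  have hε' : 0 < min (δ/2) (ε*δ*δ/2) := lt_min (by linarith) (by positivity)
  filter_upwards [(Metric.tendstoUniformlyOn_iff.mp hτu) _ hε'] with n hn z hzB
  have hzK : z ∈ closure B := subset_closure hzB
  have hz1 : 1 < ‖z‖ := hK1 z hzK
  have hwK' : (1/z) ∈ K' := ⟨z, hzK, rfl⟩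
  have hwdisk : (1/z) ∈ {w : ℂ | ‖w‖ < 1} := hK'disk hwK'
  have hR : ∀ m, (Rpoly ζ m).eval z ≠ 0 := by
    intro m h
    exact (hBc hzK).2 (subset_closure (Set.mem_iUnion.mpr ⟨m, h⟩))
  obtain ⟨-, -, -, hprod⟩ := key ζ hζ0 hζ1 z hz1 hR n
  set a := τ (1/z) with hadef
  set b := tauIter ζ (1/z) n with hbdef
  have hbne : b ≠ 0 := right_ne_zero_of_mul_eq_one hprod
  have hane : a ≠ 0 := hτ0 _ hwdisk
  have heq : tauIter ζ z n = b⁻¹ := eq_inv_of_mul_eq_one_right (by rw [mul_comm]; exact hprod)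
  have hab : dist a b < min (δ/2) (ε*δ*δ/2) := hn (1/z) hwdisk
  have ha : δ ≤ ‖a‖ := hmin (1/z) hwK'
  have hb : δ/2 < ‖b‖ := by
    have h2 := norm_sub_norm_le a b
    rw [← dist_eq_norm] at h2
    have := lt_of_lt_of_le hab (min_le_left _ _)
    linarith
  show dist (1 / a) (tauIter ζ z n) < ε
  rw [heq, one_div, dist_inv_inv₀ hane hbne]
  rw [div_lt_iff₀ (mul_pos (norm_pos_iff.mpr hane) (norm_pos_iff.mpr hbne))]
  have habs2 := lt_of_lt_of_le hab (min_le_right _ _)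
  nlinarith [hδ, hε, ha, hb, habs2, dist_nonneg (x := a) (y := b),
    mul_lt_mul_of_pos_left hb (mul_pos hε hδ)]
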